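/- Let c ∈ ℝ and R > 0 satisfy |a_l − c| < R for all l ∈ {1, …, m}, and define Q(x) = (1/(√(2π)·2πi)) · ∮_{|t − c| = R} exp(−(t−x)²/2) · ∏_{l=1}^m (t − a_l)^{−n_l} dt (counterclockwise circle integral). Then for every integer j with 0 ≤ j ≤ |n| − 2 one has ∫_{x∈ℝ} x^j · Q(x) dx = 0, and ∫_{x∈ℝ} x^{|n|−1} · Q(x) dx = 1. -/

import Mathlib

open MeasureTheory Finset

/-- The multiple Hermite linear form of type I (integral representation),
with contour a counterclockwise circle of center `c` and radius `R`. -/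
noncomputable def mhQ {m : ℕ} (a : Fin m → ℝ) (c R : ℝ) (ν : Fin m → ℕ) (y : ℝ) : ℂ :=
  ((Real.sqrt (2 * Real.pi) : ℂ) * (2 * Real.pi * Complex.I))⁻¹ *
    ∮ t in C((c : ℂ), R),
      Complex.exp (-(t - (y : ℂ)) ^ 2 / 2) * ∏ l, (t - (a l : ℂ)) ^ (-(ν l : ℤ))

open Polynomial Metric Topology Filter

lemma gauss_re (t : ℂ) (x : ℝ) : (-(t - x) ^ 2 / 2).re = (t.im ^ 2 - (x - t.re) ^ 2) / 2 := by
  simp [pow_two, Complex.div_re, Complex.normSq_apply]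
  ring

lemma gauss_norm_le (t : ℂ) (x : ℝ) :
    ‖Complex.exp (-(t - x) ^ 2 / 2)‖ ≤ Real.exp ((t.re ^ 2 + t.im ^ 2) / 2) * Real.exp (-x ^ 2 / 4) := by
  rw [Complex.norm_exp, gauss_re, ← Real.exp_add]
  apply Real.exp_le_exp.mpr
  nlinarith [sq_nonneg (x - 2 * t.re)]

lemma integrable_weight (j : ℕ) :
    Integrable (fun x : ℝ => |x| ^ j * Real.exp (-x ^ 2 / 4)) := by
  have key : ∀ x : ℝ, |x| ^ j * Real.exp (-x ^ 2 / 4)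
      ≤ (1 + (j.factorial : ℝ) * 8 ^ j) * Real.exp (-(1/8) * x ^ 2) := by
    intro x
    have h8 : (0:ℝ) ≤ x ^ 2 / 8 := by positivity
    have hp : (x ^ 2 / 8) ^ j / (j.factorial : ℝ) ≤ Real.exp (x ^ 2 / 8) :=
      Real.pow_div_factorial_le_exp _ h8 j
    have hfac : (0:ℝ) < (j.factorial : ℝ) := by exact_mod_cast j.factorial_pos
    have h8p : (0:ℝ) < (8:ℝ) ^ j := pow_pos (by norm_num) j
    have hE : (0:ℝ) < Real.exp (x ^ 2 / 8) := Real.exp_pos _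
    have hxj : |x| ^ j ≤ (1 + (j.factorial : ℝ) * 8 ^ j) * Real.exp (x ^ 2 / 8) := by
      have hexp1 : (1:ℝ) ≤ Real.exp (x ^ 2 / 8) := Real.one_le_exp h8
      have hnn : (0:ℝ) ≤ (j.factorial : ℝ) * 8 ^ j * Real.exp (x ^ 2 / 8) :=
        mul_nonneg (mul_nonneg hfac.le h8p.le) hE.le
      rcases le_total (|x|) 1 with h | h
      · have h0 : |x| ^ j ≤ 1 := pow_le_one₀ (abs_nonneg x) h
        nlinarith
      · have h1 : |x| ^ j ≤ |x| ^ (2 * j) := pow_le_pow_right₀ h (by omega)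
        have h2 : |x| ^ (2 * j) = (x ^ 2 / 8) ^ j * 8 ^ j := by
          rw [pow_mul, _root_.sq_abs, ← mul_pow, div_mul_cancel₀]
          norm_num
        have h3 : (x ^ 2 / 8) ^ j ≤ (j.factorial : ℝ) * Real.exp (x ^ 2 / 8) := by
          rw [div_le_iff₀ hfac] at hp
          linarith
        calc |x| ^ j ≤ (x ^ 2 / 8) ^ j * 8 ^ j := h1.trans_eq h2
          _ ≤ ((j.factorial : ℝ) * Real.exp (x ^ 2 / 8)) * 8 ^ j :=
              mul_le_mul_of_nonneg_right h3 h8p.le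
          _ ≤ (1 + (j.factorial : ℝ) * 8 ^ j) * Real.exp (x ^ 2 / 8) := by nlinarith
    calc |x| ^ j * Real.exp (-x ^ 2 / 4)
        ≤ ((1 + (j.factorial : ℝ) * 8 ^ j) * Real.exp (x ^ 2 / 8)) * Real.exp (-x ^ 2 / 4) :=
          mul_le_mul_of_nonneg_right hxj (Real.exp_pos _).le
      _ = (1 + (j.factorial : ℝ) * 8 ^ j) * Real.exp (-(1/8) * x ^ 2) := by
          rw [mul_assoc, ← Real.exp_add]; congr 2; ring
  refine Integrable.mono' (((integrable_exp_neg_mul_sq (by norm_num : (0:ℝ) < 1/8)).const_mul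
    (1 + (j.factorial : ℝ) * 8 ^ j))) ?_ ?_
  · exact (((continuous_pow j).comp _root_.continuous_abs).mul
      (Real.continuous_exp.comp ((continuous_pow 2).neg.div_const 4))).aestronglyMeasurable
  · filter_upwards with x
    rw [Real.norm_eq_abs, _root_.abs_of_nonneg (by positivity)]
    exact key x

lemma cont_gauss (j : ℕ) (t : ℂ) :
    Continuous (fun x : ℝ => (x:ℂ) ^ j * Complex.exp (-(t - x) ^ 2 / 2)) := by
  apply ((Complex.continuous_ofReal.pow j).mul _)
  exact Complex.continuous_exp.comp
    ((((continuous_const.sub Complex.continuous_ofReal).pow 2).neg).div_const 2)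

lemma norm_gauss_term (j : ℕ) (t : ℂ) (x : ℝ) :
    ‖(x:ℂ) ^ j * Complex.exp (-(t - x) ^ 2 / 2)‖
      ≤ Real.exp ((t.re ^ 2 + t.im ^ 2) / 2) * (|x| ^ j * Real.exp (-x ^ 2 / 4)) := by
  rw [norm_mul, norm_pow, Complex.norm_real, Real.norm_eq_abs]
  calc |x| ^ j * ‖Complex.exp (-(t - x) ^ 2 / 2)‖
      ≤ |x| ^ j * (Real.exp ((t.re ^ 2 + t.im ^ 2) / 2) * Real.exp (-x ^ 2 / 4)) :=
        mul_le_mul_of_nonneg_left (gauss_norm_le t x) (by positivity)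
    _ = _ := by ring

lemma integrable_gauss (j : ℕ) (t : ℂ) :
    Integrable (fun x : ℝ => (x:ℂ) ^ j * Complex.exp (-(t - x) ^ 2 / 2)) := by
  refine Integrable.mono' ((integrable_weight j).const_mul
    (Real.exp ((t.re ^ 2 + t.im ^ 2) / 2))) (cont_gauss j t).aestronglyMeasurable ?_
  filter_upwards with x
  exact norm_gauss_term j t x

noncomputable def mhq : ℕ → Polynomial ℂ
  | 0 => 1
  | (j+1) => X * mhq j + derivative (mhq j)

noncomputable def mhG (j : ℕ) (t : ℂ) : ℂ := ∫ x : ℝ, (x:ℂ) ^ j * Complex.exp (-(t - x) ^ 2 / 2)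

lemma mhG_zero (t : ℂ) : mhG 0 t = (Real.sqrt (2 * Real.pi) : ℂ) := by
  have h : ∀ x : ℝ, ((x:ℂ)) ^ (0:ℕ) * Complex.exp (-(t - x) ^ 2 / 2)
      = Complex.exp ((-(1/2) : ℂ) * x ^ 2 + t * x + (-(t ^ 2) / 2)) := by
    intro x; rw [pow_zero, one_mul]; congr 1; ring
  rw [mhG]
  simp_rw [h]
  rw [integral_cexp_quadratic (by norm_num : ((-(1/2):ℂ)).re < 0)]
  have h0 : -(t ^ 2) / 2 - t ^ 2 / (4 * (-(1/2):ℂ)) = 0 := by ring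
  rw [h0, Complex.exp_zero, mul_one]
  have h2 : ((Real.pi : ℂ) / -(-(1/2))) = ((2 * Real.pi : ℝ) : ℂ) := by push_cast; ring
  rw [h2, show (1/2 : ℂ) = ((1/2 : ℝ) : ℂ) by norm_num,
    ← Complex.ofReal_cpow (by positivity) (1/2 : ℝ), Real.sqrt_eq_rpow]

lemma mhG_hasDeriv (j : ℕ) (t₀ : ℂ) :
    HasDerivAt (mhG j) (mhG (j+1) t₀ - t₀ * mhG j t₀) t₀ := by
  set K : ℝ := ‖t₀‖ + 1 with hK
  clear_value K
  have hKpos : (0:ℝ) < K := by rw [hK]; positivity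
  have key := hasDerivAt_integral_of_dominated_loc_of_deriv_le
    (F := fun t (x : ℝ) => (x:ℂ) ^ j * Complex.exp (-(t - x) ^ 2 / 2))
    (F' := fun t (x : ℝ) => (x:ℂ) ^ j * (Complex.exp (-(t - x) ^ 2 / 2) * ((x:ℂ) - t)))
    (bound := fun x : ℝ => Real.exp (K ^ 2) *
      (|x| ^ (j+1) * Real.exp (-x ^ 2 / 4) + K * (|x| ^ j * Real.exp (-x ^ 2 / 4))))
    (μ := volume) (x₀ := t₀) (s := ball t₀ 1) (ball_mem_nhds t₀ one_pos)
    (Filter.Eventually.of_forall fun t => (cont_gauss j t).aestronglyMeasurable)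
    (integrable_gauss j t₀)
    ?meas' ?bnd ?bint ?diff
  case meas' =>
    apply Continuous.aestronglyMeasurable
    exact (Complex.continuous_ofReal.pow j).mul
      ((Complex.continuous_exp.comp
        ((((continuous_const.sub Complex.continuous_ofReal).pow 2).neg).div_const 2)).mul
        (Complex.continuous_ofReal.sub continuous_const))
  case bnd =>
    filter_upwards with x
    intro t ht
    have hnt : ‖t‖ ≤ K := by
      have := mem_ball_iff_norm.mp ht
      calc ‖t‖ = ‖t₀ + (t - t₀)‖ := by ring_nf
        _ ≤ ‖t₀‖ + ‖t - t₀‖ := norm_add_le _ _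
        _ ≤ K := by rw [hK]; linarith
    have hre : |t.re| ≤ K := (Complex.abs_re_le_norm t).trans hnt
    have him : |t.im| ≤ K := (Complex.abs_im_le_norm t).trans hnt
    have hexp : Real.exp ((t.re ^ 2 + t.im ^ 2) / 2) ≤ Real.exp (K ^ 2) := by
      apply Real.exp_le_exp.mpr
      have hr2 : t.re ^ 2 ≤ K ^ 2 := by rw [← _root_.sq_abs]; exact pow_le_pow_left₀ (abs_nonneg _) hre 2
      have hi2 : t.im ^ 2 ≤ K ^ 2 := by rw [← _root_.sq_abs]; exact pow_le_pow_left₀ (abs_nonneg _) him 2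
      linarith
    rw [norm_mul, norm_mul, norm_pow, Complex.norm_real, Real.norm_eq_abs]
    have hxt : ‖(x:ℂ) - t‖ ≤ |x| + K := by
      calc ‖(x:ℂ) - t‖ ≤ ‖(x:ℂ)‖ + ‖t‖ := norm_sub_le _ _
        _ ≤ |x| + K := by rw [Complex.norm_real, Real.norm_eq_abs]; linarith
    calc |x| ^ j * (‖Complex.exp (-(t - x) ^ 2 / 2)‖ * ‖(x:ℂ) - t‖)
        ≤ |x| ^ j * ((Real.exp ((t.re ^ 2 + t.im ^ 2) / 2) * Real.exp (-x ^ 2 / 4)) * (|x| + K)) := by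
          apply mul_le_mul_of_nonneg_left _ (by positivity)
          exact mul_le_mul (gauss_norm_le t x) hxt (norm_nonneg _) (by positivity)
      _ ≤ |x| ^ j * ((Real.exp (K ^ 2) * Real.exp (-x ^ 2 / 4)) * (|x| + K)) := by
          apply mul_le_mul_of_nonneg_left _ (by positivity)
          apply mul_le_mul_of_nonneg_right _ (by positivity)
          exact mul_le_mul_of_nonneg_right hexp (Real.exp_pos _).le
      _ = Real.exp (K ^ 2) *
          (|x| ^ (j+1) * Real.exp (-x ^ 2 / 4) + K * (|x| ^ j * Real.exp (-x ^ 2 / 4))) := by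
          rw [pow_succ]; ring
  case bint =>
    exact (((integrable_weight (j+1)).add ((integrable_weight j).const_mul K)).const_mul
      (Real.exp (K ^ 2))).congr (by filter_upwards with x; simp only [Pi.add_apply])
  case diff =>
    filter_upwards with x
    intro t ht
    have h1 : HasDerivAt (fun t : ℂ => -(t - x) ^ 2 / 2) (-(t - (x:ℂ))) t := by
      have : HasDerivAt (fun t : ℂ => t - (x:ℂ)) 1 t := (hasDerivAt_id t).sub_const _
      have h2 : HasDerivAt (fun t : ℂ => -(t - (x:ℂ)) ^ 2 / 2) (-((2:ℕ) * (t - (x:ℂ)) ^ (2 - 1) * 1) / 2) t := (this.pow 2).neg.div_const 2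
      convert h2 using 1
      simp [pow_one]
      ring
    have h3 := (h1.cexp).const_mul ((x:ℂ) ^ j)
    refine h3.congr_deriv ?_
    ring
  refine (key.2.congr_deriv ?_)
  have e1 : ∀ x : ℝ, (x:ℂ) ^ j * (Complex.exp (-(t₀ - x) ^ 2 / 2) * ((x:ℂ) - t₀))
      = (x:ℂ) ^ (j+1) * Complex.exp (-(t₀ - x) ^ 2 / 2)
        - t₀ * ((x:ℂ) ^ j * Complex.exp (-(t₀ - x) ^ 2 / 2)) := by
    intro x; rw [pow_succ]; ring
  calc (∫ x : ℝ, (x:ℂ) ^ j * (Complex.exp (-(t₀ - x) ^ 2 / 2) * ((x:ℂ) - t₀)))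
      = ∫ x : ℝ, ((x:ℂ) ^ (j+1) * Complex.exp (-(t₀ - x) ^ 2 / 2)
        - t₀ * ((x:ℂ) ^ j * Complex.exp (-(t₀ - x) ^ 2 / 2))) := by simp_rw [e1]
    _ = mhG (j+1) t₀ - t₀ * mhG j t₀ := by
        rw [integral_sub (integrable_gauss (j+1) t₀) ((integrable_gauss j t₀).const_mul t₀),
          integral_const_mul]
        rfl

lemma mhG_eq (j : ℕ) (t : ℂ) : mhG j t = (Real.sqrt (2 * Real.pi) : ℂ) * (mhq j).eval t := by
  induction j generalizing t with
  | zero =>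
    rw [mhG_zero]
    simp [mhq]
  | succ j ih =>
    have h1 : HasDerivAt (mhG j) (mhG (j+1) t - t * mhG j t) t := mhG_hasDeriv j t
    have h2 : HasDerivAt (mhG j)
        ((Real.sqrt (2 * Real.pi) : ℂ) * (derivative (mhq j)).eval t) t := by
      have hfe : mhG j = fun s => (Real.sqrt (2 * Real.pi) : ℂ) * (mhq j).eval s := funext ih
      rw [hfe]
      exact ((mhq j).hasDerivAt t).const_mul _
    have h3 := h1.unique h2
    have h4 : mhG (j+1) t
        = t * mhG j t + (Real.sqrt (2 * Real.pi) : ℂ) * (derivative (mhq j)).eval t := by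
      linear_combination h3
    rw [h4, ih, show mhq (j+1) = X * mhq j + derivative (mhq j) from rfl]
    simp [eval_add, eval_mul]
    ring

lemma mhq_spec : ∀ j, (mhq j).Monic ∧ (mhq j).natDegree = j := by
  intro j
  induction j with
  | zero => exact ⟨monic_one, natDegree_one⟩
  | succ j ih =>
    obtain ⟨hm, hd⟩ := ih
    have h1 : (X * mhq j).Monic := monic_X.mul hm
    have hdX : (X * mhq j).natDegree = j + 1 := by
      rw [natDegree_mul X_ne_zero hm.ne_zero, natDegree_X, hd]; omega
    have hlt : (derivative (mhq j)).degree < (X * mhq j).degree := by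
      have h2 : (derivative (mhq j)).degree < (mhq j).degree := degree_derivative_lt hm.ne_zero
      have h3 : (mhq j).degree = (j : WithBot ℕ) := by
        rw [degree_eq_natDegree hm.ne_zero, hd]
      have h4 : (X * mhq j).degree = ((j + 1 : ℕ) : WithBot ℕ) := by
        rw [degree_eq_natDegree h1.ne_zero, hdX]
      rw [h4]
      refine lt_of_lt_of_le (h2.trans_le h3.le) ?_
      exact_mod_cast Nat.le_succ j
    refine ⟨h1.add_of_left hlt, ?_⟩
    show (X * mhq j + derivative (mhq j)).natDegree = j + 1
    rw [natDegree_eq_of_degree_eq (degree_add_eq_left_of_degree_lt hlt), hdX]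

lemma poly_eval_bound (p : Polynomial ℂ) (d : ℕ) (hd : p.natDegree ≤ d) :
    ∃ C : ℝ, 0 ≤ C ∧ ∀ t : ℂ, 1 ≤ ‖t‖ → ‖p.eval t‖ ≤ C * ‖t‖ ^ d := by
  refine ⟨∑ i ∈ Finset.range (p.natDegree + 1), ‖p.coeff i‖, by positivity, fun t ht => ?_⟩
  rw [eval_eq_sum_range]
  refine (norm_sum_le _ _).trans ?_
  rw [Finset.sum_mul]
  refine Finset.sum_le_sum fun i hi => ?_
  rw [norm_mul, norm_pow]
  refine mul_le_mul_of_nonneg_left ?_ (norm_nonneg _)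
  exact pow_le_pow_right₀ ht (le_trans (Nat.lt_succ_iff.mp (Finset.mem_range.mp hi)) hd)

lemma circleIntegral_eq_zero_of_decay {c : ℂ} {R r0 C : ℝ} (hR : 0 < R) {g : ℂ → ℂ}
    (hd : ∀ t : ℂ, R ≤ dist t c → DifferentiableAt ℂ g t)
    (hC : ∀ t : ℂ, r0 ≤ ‖t‖ → ‖g t‖ * ‖t‖ ^ 2 ≤ C) :
    (∮ z in C(c, R), g z) = 0 := by
  have hC0 : 0 ≤ C := by
    have h1 : r0 ≤ ‖((max r0 1 : ℝ) : ℂ)‖ := by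
      rw [Complex.norm_real, Real.norm_eq_abs,
        abs_of_pos (lt_of_lt_of_le one_pos (le_max_right _ _))]
      exact le_max_left _ _
    exact le_trans (by positivity) (hC _ h1)
  have heq : ∀ R' : ℝ, R ≤ R' → (∮ z in C(c, R'), g z) = ∮ z in C(c, R), g z := by
    intro R' hR'
    refine Complex.circleIntegral_eq_of_differentiable_on_annulus_off_countable hR hR'
      (Set.countable_empty) ?_ ?_
    · intro z hz
      have : R ≤ dist z c := le_of_not_gt fun h => hz.2 (mem_ball.mpr h)
      exact (hd z this).continuousAt.continuousWithinAt
    · intro z hz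
      have : R ≤ dist z c := le_of_not_gt fun h => hz.1.2 (mem_closedBall.mpr h.le)
      exact hd z this
  set M := ‖∮ z in C(c, R), g z‖ with hM
  have hb : ∀ᶠ R' in Filter.atTop, M ≤ 8 * Real.pi * C / R' := by
    filter_upwards [Filter.eventually_ge_atTop R, Filter.eventually_ge_atTop (2 * ‖c‖),
      Filter.eventually_ge_atTop (2 * r0), Filter.eventually_gt_atTop 0] with R' h1 h2 h3 h4
    rw [hM, ← heq R' h1]
    have hbound : ∀ z ∈ sphere c R', ‖g z‖ ≤ 4 * C / R' ^ 2 := by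
      intro z hz
      have hz' : ‖z - c‖ = R' := by rw [mem_sphere, dist_eq_norm] at hz; exact hz
      have hnz : R' / 2 ≤ ‖z‖ := by
        have h5 : ‖z - c‖ ≤ ‖z‖ + ‖c‖ := norm_sub_le _ _
        linarith
      have hr0z : r0 ≤ ‖z‖ := le_trans (by linarith) hnz
      have hzpos : (0:ℝ) < ‖z‖ := lt_of_lt_of_le (by linarith) hnz
      have hz2 : (0:ℝ) < ‖z‖ ^ 2 := pow_pos hzpos 2
      have hgz : ‖g z‖ ≤ C / ‖z‖ ^ 2 := (le_div_iff₀ hz2).mpr (hC z hr0z)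
      refine hgz.trans ?_
      rw [div_le_div_iff₀ hz2 (by positivity)]
      have h5 : (R' / 2) ^ 2 ≤ ‖z‖ ^ 2 := pow_le_pow_left₀ (by positivity) hnz 2
      nlinarith
    refine (circleIntegral.norm_integral_le_of_norm_le_const (le_of_lt h4) hbound).trans_eq ?_
    field_simp
    ring
  have hlim : Filter.Tendsto (fun R' : ℝ => 8 * Real.pi * C / R') Filter.atTop (𝓝 0) :=
    Filter.Tendsto.div_atTop tendsto_const_nhds Filter.tendsto_id
  exact norm_le_zero_iff.mp (ge_of_tendsto hlim hb)

noncomputable def mhP {m : ℕ} (a : Fin m → ℝ) (n : Fin m → ℕ) : Polynomial ℂ :=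
  ∏ l, (X - Polynomial.C ((a l : ℝ) : ℂ)) ^ (n l)

lemma mhP_monic {m : ℕ} (a : Fin m → ℝ) (n : Fin m → ℕ) : (mhP a n).Monic :=
  monic_prod_of_monic _ _ fun l _ => (monic_X_sub_C _).pow _

lemma mhP_natDegree {m : ℕ} (a : Fin m → ℝ) (n : Fin m → ℕ) :
    (mhP a n).natDegree = ∑ l, n l := by
  rw [mhP, natDegree_prod]
  · simp [natDegree_pow]
  · intro l _
    exact pow_ne_zero _ (X_sub_C_ne_zero _)

lemma mhP_eval {m : ℕ} (a : Fin m → ℝ) (n : Fin m → ℕ) (z : ℂ) :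
    (mhP a n).eval z = ∏ l, (z - ((a l : ℝ) : ℂ)) ^ (n l) := by
  simp [mhP, eval_prod]

lemma mhP_lower {m : ℕ} (a : Fin m → ℝ) (n : Fin m → ℕ) (z : ℂ)
    (hz : 2 * (∑ l, |a l|) + 1 ≤ ‖z‖) :
    (‖z‖ / 2) ^ (∑ l, n l) ≤ ‖(mhP a n).eval z‖ := by
  rw [mhP_eval, norm_prod]
  simp_rw [norm_pow]
  rw [← Finset.prod_pow_eq_pow_sum]
  apply Finset.prod_le_prod
  · intros; positivity
  · intro l _
    apply pow_le_pow_left₀ (by positivity)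
    have h1 : |a l| ≤ ∑ k, |a k| :=
      Finset.single_le_sum (f := fun k => |a k|) (fun k _ => abs_nonneg _) (Finset.mem_univ l)
    have h2 : ‖((a l : ℝ) : ℂ)‖ = |a l| := by rw [Complex.norm_real, Real.norm_eq_abs]
    have h3 := norm_sub_norm_le z ((a l : ℝ) : ℂ)
    have h4 : 0 ≤ ∑ k, |a k| := Finset.sum_nonneg fun k _ => abs_nonneg _
    linarith

lemma mhP_ne_zero {m : ℕ} (a : Fin m → ℝ) (n : Fin m → ℕ) {c R : ℝ} (hR : 0 < R)
    (hc : ∀ l, |a l - c| < R) (z : ℂ) (hz : R ≤ dist z (c:ℂ)) : (mhP a n).eval z ≠ 0 := by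
  rw [mhP_eval]
  apply Finset.prod_ne_zero_iff.mpr
  intro l _
  apply pow_ne_zero
  intro h0
  have hz' : z = ((a l : ℝ) : ℂ) := sub_eq_zero.mp h0
  have : dist z (c:ℂ) = |a l - c| := by
    rw [hz', dist_eq_norm, ← Complex.ofReal_sub, Complex.norm_real, Real.norm_eq_abs]
  linarith [hc l]

lemma contour_zero {m : ℕ} (a : Fin m → ℝ) (n : Fin m → ℕ) {c R : ℝ} (hR : 0 < R)
    (hc : ∀ l, |a l - c| < R) (p : Polynomial ℂ) (hdeg : p.natDegree + 2 ≤ ∑ l, n l) :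
    (∮ z in C((c:ℂ), R), p.eval z * ((mhP a n).eval z)⁻¹) = 0 := by
  obtain ⟨C1, hC1, hb⟩ := poly_eval_bound p ((∑ l, n l) - 2) (by omega)
  set N := ∑ l, n l with hN
  apply circleIntegral_eq_zero_of_decay (r0 := 2 * (∑ l, |a l|) + 2) (C := C1 * 2 ^ N) hR
  · intro t ht
    exact (p.differentiableAt).mul
      (((mhP a n).differentiableAt).inv (mhP_ne_zero a n hR hc t ht))
  · intro t ht
    have hS : 0 ≤ ∑ l, |a l| := Finset.sum_nonneg fun k _ => abs_nonneg _
    have h1 : 1 ≤ ‖t‖ := by linarith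
    have h2 : 2 * (∑ l, |a l|) + 1 ≤ ‖t‖ := by linarith
    have hlow := mhP_lower a n t h2
    have htpos : (0:ℝ) < ‖t‖ := lt_of_lt_of_le one_pos h1
    have hPpos : (0:ℝ) < ‖(mhP a n).eval t‖ := lt_of_lt_of_le (by positivity) hlow
    rw [norm_mul, norm_inv]
    have key : ‖p.eval t‖ * ‖t‖ ^ 2 ≤ C1 * ‖t‖ ^ N := by
      calc ‖p.eval t‖ * ‖t‖ ^ 2 ≤ (C1 * ‖t‖ ^ (N - 2)) * ‖t‖ ^ 2 :=
            mul_le_mul_of_nonneg_right (hb t h1) (by positivity)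
        _ = C1 * ‖t‖ ^ N := by rw [mul_assoc, ← pow_add]; congr 2; omega
    calc ‖p.eval t‖ * ‖(mhP a n).eval t‖⁻¹ * ‖t‖ ^ 2
        = (‖p.eval t‖ * ‖t‖ ^ 2) / ‖(mhP a n).eval t‖ := by
          rw [div_eq_mul_inv]; ring
      _ ≤ (C1 * ‖t‖ ^ N) / ((‖t‖ / 2) ^ N) := by
          apply div_le_div₀ (by positivity) key (by positivity) hlow
      _ = C1 * 2 ^ N := by
          rw [div_eq_iff (by positivity : ((‖t‖ / 2 : ℝ)) ^ N ≠ 0), div_pow]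
          field_simp

lemma contour_one {m : ℕ} (a : Fin m → ℝ) (n : Fin m → ℕ) {c R : ℝ} (hR : 0 < R)
    (hc : ∀ l, |a l - c| < R) (p : Polynomial ℂ) (hmon : p.Monic)
    (hdeg : p.natDegree + 1 = ∑ l, n l) :
    (∮ z in C((c:ℂ), R), p.eval z * ((mhP a n).eval z)⁻¹) = 2 * Real.pi * Complex.I := by
  set N := ∑ l, n l with hN
  set q : Polynomial ℂ := (X - Polynomial.C ((c:ℝ):ℂ)) * p - mhP a n with hq
  have hmon1 : ((X - Polynomial.C ((c:ℝ):ℂ)) * p).Monic := (monic_X_sub_C _).mul hmon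
  have hdeg1 : ((X - Polynomial.C ((c:ℝ):ℂ)) * p).natDegree = N := by
    rw [natDegree_mul (X_sub_C_ne_zero _) hmon.ne_zero, natDegree_X_sub_C]
    omega
  have hqdeg : q.natDegree ≤ N - 1 := by
    by_cases h0 : q = 0
    · simp [h0]
    have hlt : q.degree < ((X - Polynomial.C ((c:ℝ):ℂ)) * p).degree := by
      apply degree_sub_lt
      · rw [degree_eq_natDegree hmon1.ne_zero, degree_eq_natDegree (mhP_monic a n).ne_zero,
          hdeg1, mhP_natDegree]
      · exact hmon1.ne_zero
      · rw [hmon1.leadingCoeff, (mhP_monic a n).leadingCoeff]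
    rw [degree_eq_natDegree hmon1.ne_zero, hdeg1] at hlt
    have := (natDegree_lt_iff_degree_lt h0).mpr hlt
    omega
  have hN1 : 1 ≤ N := by omega
  obtain ⟨C1, hC1, hb⟩ := poly_eval_bound q (N - 1) hqdeg
  have hkey : (∮ z in C((c:ℂ), R),
      (p.eval z * ((mhP a n).eval z)⁻¹ - (z - (c:ℂ))⁻¹)) = 0 := by
    apply circleIntegral_eq_zero_of_decay
      (r0 := 2 * (∑ l, |a l|) + 2 * ‖((c:ℝ):ℂ)‖ + 2) (C := C1 * 2 ^ (N + 1)) hR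
    · intro t ht
      have hne := mhP_ne_zero a n hR hc t ht
      have htc : t ≠ ((c:ℝ):ℂ) := by
        intro h
        rw [h] at ht
        simp only [dist_self] at ht
        linarith
      exact ((p.differentiableAt).mul (((mhP a n).differentiableAt).inv hne)).sub
        ((differentiableAt_id.sub_const _).inv (sub_ne_zero.mpr htc))
    · intro t ht
      have hS : 0 ≤ ∑ l, |a l| := Finset.sum_nonneg fun k _ => abs_nonneg _
      have hcn : 0 ≤ ‖((c:ℝ):ℂ)‖ := norm_nonneg _
      have h1 : 1 ≤ ‖t‖ := by linarith
      have h2 : 2 * (∑ l, |a l|) + 1 ≤ ‖t‖ := by linarith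
      have hlow := mhP_lower a n t h2
      have htpos : (0:ℝ) < ‖t‖ := lt_of_lt_of_le one_pos h1
      have hPpos : (0:ℝ) < ‖(mhP a n).eval t‖ := lt_of_lt_of_le (by positivity) hlow
      have hPne : (mhP a n).eval t ≠ 0 := norm_pos_iff.mp hPpos
      have htc : ‖t - ((c:ℝ):ℂ)‖ ≥ ‖t‖ / 2 := by
        have := norm_sub_norm_le t ((c:ℝ):ℂ)
        linarith
      have htcne : t - ((c:ℝ):ℂ) ≠ 0 := by
        intro h
        have heq : t = ((c:ℝ):ℂ) := sub_eq_zero.mp h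
        rw [heq] at ht
        linarith
      have hiden : p.eval t * ((mhP a n).eval t)⁻¹ - (t - ((c:ℝ):ℂ))⁻¹
          = q.eval t * ((mhP a n).eval t * (t - ((c:ℝ):ℂ)))⁻¹ := by
        rw [hq]
        simp only [eval_sub, eval_mul, eval_X, eval_C]
        field_simp
      rw [hiden, norm_mul, norm_inv, norm_mul]
      have key : ‖q.eval t‖ * ‖t‖ ^ 2 ≤ C1 * ‖t‖ ^ (N + 1) := by
        calc ‖q.eval t‖ * ‖t‖ ^ 2 ≤ (C1 * ‖t‖ ^ (N - 1)) * ‖t‖ ^ 2 :=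
              mul_le_mul_of_nonneg_right (hb t h1) (by positivity)
          _ = C1 * ‖t‖ ^ (N + 1) := by rw [mul_assoc, ← pow_add]; congr 2; omega
      have hlow2 : (‖t‖ / 2) ^ (N + 1) ≤ ‖(mhP a n).eval t‖ * ‖t - ((c:ℝ):ℂ)‖ := by
        calc (‖t‖ / 2) ^ (N + 1) = (‖t‖ / 2) ^ N * (‖t‖ / 2) := by rw [pow_succ]
          _ ≤ ‖(mhP a n).eval t‖ * ‖t - ((c:ℝ):ℂ)‖ :=
            mul_le_mul hlow htc (by positivity) (le_of_lt hPpos)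
      calc ‖q.eval t‖ * (‖(mhP a n).eval t‖ * ‖t - ((c:ℝ):ℂ)‖)⁻¹ * ‖t‖ ^ 2
          = (‖q.eval t‖ * ‖t‖ ^ 2) / (‖(mhP a n).eval t‖ * ‖t - ((c:ℝ):ℂ)‖) := by
            rw [div_eq_mul_inv]; ring
        _ ≤ (C1 * ‖t‖ ^ (N + 1)) / ((‖t‖ / 2) ^ (N + 1)) := by
            apply div_le_div₀ (by positivity) key (by positivity) hlow2
        _ = C1 * 2 ^ (N + 1) := by
            rw [div_eq_iff (by positivity : ((‖t‖ / 2 : ℝ)) ^ (N + 1) ≠ 0), div_pow]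
            field_simp
  have hint1 : CircleIntegrable (fun z => p.eval z * ((mhP a n).eval z)⁻¹) (c:ℂ) R := by
    apply ContinuousOn.circleIntegrable hR.le
    intro z hz
    have hz' : R ≤ dist z (c:ℂ) := (mem_sphere.mp hz).ge
    exact ((p.differentiableAt).mul
      (((mhP a n).differentiableAt).inv (mhP_ne_zero a n hR hc z hz'))).continuousAt.continuousWithinAt
  have hint2 : CircleIntegrable (fun z => (z - ((c:ℝ):ℂ))⁻¹) (c:ℂ) R := by
    apply ContinuousOn.circleIntegrable hR.le
    intro z hz
    have hz' : R ≤ dist z (c:ℂ) := (mem_sphere.mp hz).ge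
    have htc : z ≠ ((c:ℝ):ℂ) := by
      intro h
      rw [h] at hz'
      simp only [dist_self] at hz'
      linarith
    exact (((differentiableAt_id (𝕜 := ℂ) (x := z)).sub_const _).inv
      (sub_ne_zero.mpr htc)).continuousAt.continuousWithinAt
  rw [circleIntegral.integral_sub hint1 hint2] at hkey
  have h2pi := circleIntegral.integral_sub_inv_of_mem_ball (mem_ball_self hR : (c:ℂ) ∈ ball (c:ℂ) R)
  rw [sub_eq_zero] at hkey
  rw [hkey, h2pi]

lemma zpow_prod_eq {m : ℕ} (a : Fin m → ℝ) (n : Fin m → ℕ) (z : ℂ) :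
    ∏ l, (z - ((a l : ℝ) : ℂ)) ^ (-(n l : ℤ)) = ((mhP a n).eval z)⁻¹ := by
  rw [mhP_eval, ← Finset.prod_inv_distrib]
  simp_rw [zpow_neg, zpow_natCast]

lemma mhQ_moment (m : ℕ) (a : Fin m → ℝ) (n : Fin m → ℕ) {c R : ℝ} (hR : 0 < R)
    (hc : ∀ l, |a l - c| < R) (j : ℕ) :
    ∫ x : ℝ, (x : ℂ) ^ j * mhQ a c R n x
      = (2 * Real.pi * Complex.I)⁻¹ *
        ∮ z in C((c:ℂ), R), (mhq j).eval z * ((mhP a n).eval z)⁻¹ := by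
  have h2pi : (0:ℝ) < 2 * Real.pi := by positivity
  set K : ℂ := ((Real.sqrt (2 * Real.pi) : ℂ) * (2 * Real.pi * Complex.I))⁻¹ with hK
  -- rewrite mhQ as a set integral over Ioc
  have hQ : ∀ x : ℝ, mhQ a c R n x = K * ∫ θ in Set.Ioc 0 (2 * Real.pi),
      deriv (circleMap (c:ℂ) R) θ •
        (Complex.exp (-(circleMap (c:ℂ) R θ - (x:ℂ)) ^ 2 / 2) *
          ((mhP a n).eval (circleMap (c:ℂ) R θ))⁻¹) := by
    intro x
    rw [mhQ, ← hK]
    congr 1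
    rw [circleIntegral, intervalIntegral.integral_of_le h2pi.le]
    congr 1
    funext θ
    rw [zpow_prod_eq a n]
  have step1 : ∀ x : ℝ, (x : ℂ) ^ j * mhQ a c R n x
      = K * ∫ θ in Set.Ioc 0 (2 * Real.pi),
        (x:ℂ) ^ j * (deriv (circleMap (c:ℂ) R) θ •
          (Complex.exp (-(circleMap (c:ℂ) R θ - (x:ℂ)) ^ 2 / 2) *
            ((mhP a n).eval (circleMap (c:ℂ) R θ))⁻¹)) := by
    intro x
    rw [hQ x, mul_left_comm, integral_const_mul]
  simp_rw [step1]
  rw [integral_const_mul]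
  -- Fubini
  set E0 : ℝ := Real.exp ((|c| + R) ^ 2 / 2) with hE0
  set δ : ℝ := ∏ l, (R - |a l - c|) ^ (n l) with hδ
  have hδpos : 0 < δ := by
    apply Finset.prod_pos
    intro l _
    exact pow_pos (by linarith [hc l, abs_nonneg (a l - c)]) _
  have hnormcm : ∀ θ : ℝ, ‖circleMap (c:ℂ) R θ - (c:ℂ)‖ = R := by
    intro θ
    rw [circleMap_sub_center, norm_circleMap_zero, abs_of_pos hR]
  have hTnorm : ∀ θ : ℝ, ‖circleMap (c:ℂ) R θ‖ ≤ |c| + R := by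
    intro θ
    have h1 := hnormcm θ
    have h2 := norm_sub_norm_le (circleMap (c:ℂ) R θ) (c:ℂ)
    have h3 : ‖(c:ℂ)‖ = |c| := by rw [Complex.norm_real, Real.norm_eq_abs]
    linarith
  have hTsphere : ∀ θ : ℝ, R ≤ dist (circleMap (c:ℂ) R θ) (c:ℂ) := by
    intro θ
    rw [dist_eq_norm, hnormcm θ]
  have hPlow : ∀ θ : ℝ, δ ≤ ‖(mhP a n).eval (circleMap (c:ℂ) R θ)‖ := by
    intro θ
    rw [mhP_eval, norm_prod, hδ]
    apply Finset.prod_le_prod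
    · intro l _
      exact pow_nonneg (by linarith [hc l, abs_nonneg (a l - c)]) _
    · intro l _
      rw [norm_pow]
      apply pow_le_pow_left₀ (by linarith [hc l, abs_nonneg (a l - c)])
      have e1 : circleMap (c:ℂ) R θ - ((a l : ℝ):ℂ)
          = (circleMap (c:ℂ) R θ - (c:ℂ)) - (((a l : ℝ):ℂ) - (c:ℂ)) := by ring
      have e2 : ‖circleMap (c:ℂ) R θ - (c:ℂ)‖ = R := hnormcm θ
      have e3 : ‖((a l : ℝ):ℂ) - (c:ℂ)‖ = |a l - c| := by
        rw [← Complex.ofReal_sub, Complex.norm_real, Real.norm_eq_abs]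
      have e4 := norm_sub_norm_le (circleMap (c:ℂ) R θ - (c:ℂ)) (((a l : ℝ):ℂ) - (c:ℂ))
      rw [← e1] at e4
      linarith
  have hDnorm : ∀ θ : ℝ, ‖deriv (circleMap (c:ℂ) R) θ‖ = R := by
    intro θ
    rw [deriv_circleMap, norm_mul, Complex.norm_I,
      mul_one, norm_circleMap_zero, abs_of_pos hR]
  have hGbound : ∀ (x θ : ℝ),
      ‖(x:ℂ) ^ j * (deriv (circleMap (c:ℂ) R) θ •
        (Complex.exp (-(circleMap (c:ℂ) R θ - (x:ℂ)) ^ 2 / 2) *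
          ((mhP a n).eval (circleMap (c:ℂ) R θ))⁻¹))‖
      ≤ (R * E0 * δ⁻¹) * (|x| ^ j * Real.exp (-x ^ 2 / 4)) := by
    intro x θ
    set T := circleMap (c:ℂ) R θ with hT
    have hre : T.re ^ 2 + T.im ^ 2 ≤ (|c| + R) ^ 2 := by
      have h1 : T.re ^ 2 + T.im ^ 2 = ‖T‖ ^ 2 := by
        rw [Complex.sq_norm, Complex.normSq_apply]
        ring
      rw [h1]
      apply pow_le_pow_left₀ (norm_nonneg _) (hTnorm θ)
    have hexp : ‖Complex.exp (-(T - (x:ℂ)) ^ 2 / 2)‖ ≤ E0 * Real.exp (-x ^ 2 / 4) := by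
      refine (gauss_norm_le T x).trans ?_
      apply mul_le_mul_of_nonneg_right _ (Real.exp_pos _).le
      apply Real.exp_le_exp.mpr
      linarith
    have hPinv : ‖((mhP a n).eval T)⁻¹‖ ≤ δ⁻¹ := by
      rw [norm_inv]
      exact inv_anti₀ hδpos (hPlow θ)
    rw [smul_eq_mul, norm_mul, norm_mul, norm_mul, norm_pow, Complex.norm_real,
      Real.norm_eq_abs, hDnorm θ]
    calc |x| ^ j * (R * (‖Complex.exp (-(T - (x:ℂ)) ^ 2 / 2)‖ * ‖((mhP a n).eval T)⁻¹‖))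
        ≤ |x| ^ j * (R * ((E0 * Real.exp (-x ^ 2 / 4)) * δ⁻¹)) := by
          apply mul_le_mul_of_nonneg_left _ (by positivity)
          apply mul_le_mul_of_nonneg_left _ hR.le
          exact mul_le_mul hexp hPinv (norm_nonneg _) (by positivity)
      _ = (R * E0 * δ⁻¹) * (|x| ^ j * Real.exp (-x ^ 2 / 4)) := by ring
  have hcont : Continuous (Function.uncurry fun (x θ : ℝ) =>
      (x:ℂ) ^ j * (deriv (circleMap (c:ℂ) R) θ •
        (Complex.exp (-(circleMap (c:ℂ) R θ - (x:ℂ)) ^ 2 / 2) *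
          ((mhP a n).eval (circleMap (c:ℂ) R θ))⁻¹))) := by
    have hT : Continuous (circleMap (c:ℂ) R) := continuous_circleMap _ _
    have hD : Continuous (deriv (circleMap (c:ℂ) R)) := by
      have hfd : deriv (circleMap (c:ℂ) R) = fun θ => circleMap 0 R θ * Complex.I :=
        funext fun θ => deriv_circleMap _ _ _
      rw [hfd]
      exact (continuous_circleMap 0 R).mul continuous_const
    have hPinv : Continuous fun θ : ℝ => (((mhP a n).eval (circleMap (c:ℂ) R θ))⁻¹) :=
      ((mhP a n).continuous.comp hT).inv₀ fun θ => mhP_ne_zero a n hR hc _ (hTsphere θ)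
    apply Continuous.mul
    · exact (Complex.continuous_ofReal.comp continuous_fst).pow j
    · apply Continuous.smul (hD.comp continuous_snd)
      apply Continuous.mul
      · apply Complex.continuous_exp.comp
        exact ((((hT.comp continuous_snd).sub
          (Complex.continuous_ofReal.comp continuous_fst)).pow 2).neg).div_const 2
      · exact hPinv.comp continuous_snd
  have hInt : Integrable (Function.uncurry fun (x θ : ℝ) =>
      (x:ℂ) ^ j * (deriv (circleMap (c:ℂ) R) θ •
        (Complex.exp (-(circleMap (c:ℂ) R θ - (x:ℂ)) ^ 2 / 2) *
          ((mhP a n).eval (circleMap (c:ℂ) R θ))⁻¹)))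
      (volume.prod (volume.restrict (Set.Ioc 0 (2 * Real.pi)))) := by
    have hone : Integrable (fun _ : ℝ => (1:ℝ)) (volume.restrict (Set.Ioc 0 (2 * Real.pi))) :=
      integrableOn_const measure_Ioc_lt_top.ne
    have hw : Integrable (fun x : ℝ => (R * E0 * δ⁻¹) * (|x| ^ j * Real.exp (-x ^ 2 / 4))) :=
      (integrable_weight j).const_mul _
    have hprod := hw.mul_prod hone
    refine Integrable.mono' hprod hcont.aestronglyMeasurable ?_
    refine Filter.Eventually.of_forall fun z => ?_
    rw [mul_one]
    exact hGbound z.1 z.2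
  rw [integral_integral_swap hInt]
  -- evaluate the inner integral
  have step2 : ∀ θ : ℝ, (∫ x : ℝ, (x:ℂ) ^ j * (deriv (circleMap (c:ℂ) R) θ •
      (Complex.exp (-(circleMap (c:ℂ) R θ - (x:ℂ)) ^ 2 / 2) *
        ((mhP a n).eval (circleMap (c:ℂ) R θ))⁻¹)))
      = (Real.sqrt (2 * Real.pi) : ℂ) * (deriv (circleMap (c:ℂ) R) θ •
          ((mhq j).eval (circleMap (c:ℂ) R θ) *
            ((mhP a n).eval (circleMap (c:ℂ) R θ))⁻¹)) := by
    intro θ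
    have e1 : ∀ x : ℝ, (x:ℂ) ^ j * (deriv (circleMap (c:ℂ) R) θ •
        (Complex.exp (-(circleMap (c:ℂ) R θ - (x:ℂ)) ^ 2 / 2) *
          ((mhP a n).eval (circleMap (c:ℂ) R θ))⁻¹))
        = (deriv (circleMap (c:ℂ) R) θ * ((mhP a n).eval (circleMap (c:ℂ) R θ))⁻¹) *
          ((x:ℂ) ^ j * Complex.exp (-(circleMap (c:ℂ) R θ - (x:ℂ)) ^ 2 / 2)) := by
      intro x
      rw [smul_eq_mul]
      ring
    simp_rw [e1]
    rw [integral_const_mul]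
    rw [show (∫ x : ℝ, (x:ℂ) ^ j * Complex.exp (-(circleMap (c:ℂ) R θ - (x:ℂ)) ^ 2 / 2))
      = mhG j (circleMap (c:ℂ) R θ) from rfl]
    rw [mhG_eq, smul_eq_mul]
    ring
  simp_rw [step2]
  rw [integral_const_mul, ← intervalIntegral.integral_of_le h2pi.le]
  rw [show (∫ θ in (0:ℝ)..(2 * Real.pi), deriv (circleMap (c:ℂ) R) θ •
      ((mhq j).eval (circleMap (c:ℂ) R θ) * ((mhP a n).eval (circleMap (c:ℂ) R θ))⁻¹))
    = ∮ z in C((c:ℂ), R), (mhq j).eval z * ((mhP a n).eval z)⁻¹ from rfl]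
  rw [← mul_assoc]
  congr 1
  rw [hK]
  have hs : (Real.sqrt (2 * Real.pi) : ℂ) ≠ 0 := by
    simp only [ne_eq, Complex.ofReal_eq_zero]
    positivity
  rw [mul_inv, mul_comm ((Real.sqrt (2 * Real.pi) : ℂ))⁻¹ (2 * (Real.pi:ℂ) * Complex.I)⁻¹,
    mul_assoc, inv_mul_cancel₀ hs, mul_one]

theorem stmt_5 (m : ℕ) (hm : 1 ≤ m) (a : Fin m → ℝ) (ha : Function.Injective a)
    (n : Fin m → ℕ) (hn : ∀ k, 1 ≤ n k)
    (c R : ℝ) (hR : 0 < R) (hc : ∀ l, |a l - c| < R) :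
    (∀ j : ℕ, j + 2 ≤ ∑ k, n k →
      ∫ x : ℝ, (x : ℂ) ^ j * mhQ a c R n x = 0) ∧
    ∫ x : ℝ, (x : ℂ) ^ ((∑ k, n k) - 1) * mhQ a c R n x = 1 := by
  have hN1 : 1 ≤ ∑ k, n k :=
    le_trans (hn ⟨0, hm⟩)
      (Finset.single_le_sum (f := n) (fun k _ => Nat.zero_le _) (Finset.mem_univ _))
  have h2piI : (2 * (Real.pi : ℂ) * Complex.I) ≠ 0 :=
    mul_ne_zero (mul_ne_zero two_ne_zero (Complex.ofReal_ne_zero.mpr Real.pi_ne_zero))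
      Complex.I_ne_zero
  constructor
  · intro j hj
    rw [mhQ_moment m a n hR hc j,
      contour_zero a n hR hc (mhq j) (by rw [(mhq_spec j).2]; omega), mul_zero]
  · rw [mhQ_moment m a n hR hc _,
      contour_one a n hR hc (mhq ((∑ k, n k) - 1)) (mhq_spec _).1 (by rw [(mhq_spec _).2]; omega)]
    exact inv_mul_cancel₀ h2piI
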